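/- In the first-last conformant bribery construction: starting from the first-last conformant manipulation instance built from an exact perfect bipartite matching instance (bipartite graph G on parts of size n, red edges E', parameter k), add two fresh candidates r and r̂, add n(n+1)+k voters voting r first and r̂ last (r > ⋯ > r̂), and set the bribe limit to n(n+1)+k. Then p can be made a first-last winner by a conformant bribery of at most n(n+1)+k voters if and only if G has a perfect matching with exactly k red edges; moreover, any successful bribery must change exactly the n(n+1)+k added r-voters. -/

import Mathlib

/-- Candidates of the underlying manipulation construction: `inl i` is
`a_i ∈ A`, `inr (inl j)` is `b_j ∈ B`, `inr (inr (inl ((i,j), t)))` is the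
dummy `d_{t+1}^{ij}`, and `inr (inr (inr ()))` is `p`. -/
abbrev Cand14 (n : ℕ) :=
  Fin n ⊕ Fin n ⊕ (Fin n × Fin n) × Fin (n + 1) ⊕ Unit

/-- Candidates of the bribery construction: the old candidates plus two fresh
candidates `r = inr true` and `r̂ = inr false`. -/
abbrev Cand18 (n : ℕ) := Cand14 n ⊕ Bool

/-- Since first-last only consumes the top and bottom candidates of each
vote, a vote is modeled as a pair (top candidate, bottom candidate). -/
abbrev Vote18 (n : ℕ) := Cand18 n × Cand18 n

instance cand18DecEq (n : ℕ) : DecidableEq (Cand18 n) :=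
  fun a b => instDecidableEqSum a b

def aC {n : ℕ} (i : Fin n) : Cand18 n := Sum.inl (Sum.inl i)
def bC {n : ℕ} (j : Fin n) : Cand18 n := Sum.inl (Sum.inr (Sum.inl j))
def dC {n : ℕ} (e : Fin n × Fin n) (t : Fin (n + 1)) : Cand18 n :=
  Sum.inl (Sum.inr (Sum.inr (Sum.inl (e, t))))
def pC (n : ℕ) : Cand18 n := Sum.inl (Sum.inr (Sum.inr (Sum.inr ())))
def rC (n : ℕ) : Cand18 n := Sum.inr true
def rhatC (n : ℕ) : Cand18 n := Sum.inr false

/-- The chain of `n + 3` voters for a red edge `e = (i, j)`. -/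
def redChain {n : ℕ} (e : Fin n × Fin n) : Multiset (Vote18 n) :=
  {(bC e.2, dC e 0)} +
    (Finset.univ : Finset (Fin n)).val.map
      (fun t => (dC e t.castSucc, dC e t.succ)) +
    {(dC e (Fin.last n), aC e.1), (aC e.1, bC e.2)}

/-- The chain of `n + 2` voters for a non-red edge `e = (i, j)`. -/
def plainChain {n : ℕ} (e : Fin n × Fin n) : Multiset (Vote18 n) :=
  {(bC e.2, dC e 0)} +
    ((Finset.univ.filter (fun t : Fin n => t.1 + 1 < n)).val.map
      (fun t => (dC e t.castSucc, dC e t.succ))) +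
    {(dC e ⟨n - 1, by omega⟩, aC e.1), (aC e.1, bC e.2)}

/-- The votes of the bribery construction: the votes of the manipulation
construction (vertex voters and edge chains) plus `n(n+1) + k` voters voting
`r > ⋯ > r̂`. -/
def votes18 {n : ℕ} (E E' : Finset (Fin n × Fin n)) (k : ℕ) :
    Multiset (Vote18 n) :=
  (Finset.univ : Finset (Fin n)).val.map (fun i => (aC i, bC i)) +
    E.val.bind (fun e => if e ∈ E' then redChain e else plainChain e) +
    Multiset.replicate (n * (n + 1) + k) (rC n, rhatC n)

/-- The first-last score of candidate `c`. -/
def flScore18 {n : ℕ} (V : Multiset (Vote18 n)) (c : Cand18 n) : ℤ :=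
  (V.countP (fun v => v.1 = c) : ℤ) - (V.countP (fun v => v.2 = c) : ℤ)

-- ====== my additions ======
namespace Stmt18
open Multiset Finset
variable {n : ℕ}

def wt (v : Vote18 n) (c : Cand18 n) : ℤ :=
  (if v.1 = c then 1 else 0) - (if v.2 = c then 1 else 0)

lemma flScore18_eq (V : Multiset (Vote18 n)) (c : Cand18 n) :
    flScore18 V c = (V.map (fun v => wt v c)).sum := by
  induction V using Multiset.induction with
  | empty => simp [flScore18]
  | cons a s ih =>
    simp only [flScore18, Multiset.countP_cons, Multiset.map_cons, Multiset.sum_cons] at *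
    push_cast
    rw [← ih]
    simp [flScore18, wt]
    ring

lemma flScore18_add (U V : Multiset (Vote18 n)) (c : Cand18 n) :
    flScore18 (U + V) c = flScore18 U c + flScore18 V c := by
  simp [flScore18_eq]

lemma mem_redChain {e : Fin n × Fin n} {v : Vote18 n} :
    v ∈ redChain e ↔ v = (bC e.2, dC e 0) ∨
      (∃ t : Fin n, v = (dC e t.castSucc, dC e t.succ)) ∨
      v = (dC e (Fin.last n), aC e.1) ∨ v = (aC e.1, bC e.2) := by
  simp only [redChain, Multiset.mem_add, Multiset.mem_map, Multiset.mem_singleton,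
    Finset.mem_val, Finset.mem_univ, true_and, Multiset.insert_eq_cons, Multiset.mem_cons]
  constructor
  · rintro ((h | ⟨t, ht⟩) | h | h) <;> [exact Or.inl h; exact Or.inr (Or.inl ⟨t, ht.symm⟩); exact Or.inr (Or.inr (Or.inl h)); exact Or.inr (Or.inr (Or.inr h))]
  · rintro (h | ⟨t, ht⟩ | h | h) <;> [exact Or.inl (Or.inl h); exact Or.inl (Or.inr ⟨t, ht.symm⟩); exact Or.inr (Or.inl h); exact Or.inr (Or.inr h)]

lemma mem_plainChain {e : Fin n × Fin n} {v : Vote18 n} :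
    v ∈ plainChain e ↔ v = (bC e.2, dC e 0) ∨
      (∃ t : Fin n, t.1 + 1 < n ∧ v = (dC e t.castSucc, dC e t.succ)) ∨
      v = (dC e ⟨n - 1, by omega⟩, aC e.1) ∨ v = (aC e.1, bC e.2) := by
  simp only [plainChain, Multiset.mem_add, Multiset.mem_map, Multiset.mem_singleton,
    Finset.mem_val, Finset.mem_filter, Finset.mem_univ, true_and, Multiset.insert_eq_cons,
    Multiset.mem_cons]
  constructor
  · rintro ((h | ⟨t, ht, ht2⟩) | h | h) <;> [exact Or.inl h; exact Or.inr (Or.inl ⟨t, ht, ht2.symm⟩); exact Or.inr (Or.inr (Or.inl h)); exact Or.inr (Or.inr (Or.inr h))]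
  · rintro (h | ⟨t, ht, ht2⟩ | h | h) <;> [exact Or.inl (Or.inl h); exact Or.inl (Or.inr ⟨t, ht, ht2.symm⟩); exact Or.inr (Or.inl h); exact Or.inr (Or.inr h)]


def votesBase {n : ℕ} (E E' : Finset (Fin n × Fin n)) : Multiset (Vote18 n) :=
  (Finset.univ : Finset (Fin n)).val.map (fun i => (aC i, bC i)) +
    E.val.bind (fun e => if e ∈ E' then redChain e else plainChain e)

lemma votes18_eq (E E' : Finset (Fin n × Fin n)) (k : ℕ) :
    votes18 E E' k = votesBase E E' +
      Multiset.replicate (n * (n + 1) + k) (rC n, rhatC n) := rfl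

lemma mem_votes18 {E E' : Finset (Fin n × Fin n)} {k : ℕ} {v : Vote18 n} (hn : 0 < n) :
    v ∈ votes18 E E' k ↔ (∃ i, v = (aC i, bC i)) ∨
      (∃ e ∈ E, v ∈ (if e ∈ E' then redChain e else plainChain e)) ∨
      v = (rC n, rhatC n) := by
  have hN : n * (n + 1) + k ≠ 0 := by positivity
  simp only [votes18, Multiset.mem_add, Multiset.mem_map, Finset.mem_val, Finset.mem_univ,
    true_and, Multiset.mem_bind, Multiset.mem_replicate, hN, ne_eq, not_false_eq_true]
  constructor
  · rintro ((⟨i, hi⟩ | ⟨e, he, hv⟩) | h)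
    · exact Or.inl ⟨i, hi.symm⟩
    · exact Or.inr (Or.inl ⟨e, he, hv⟩)
    · exact Or.inr (Or.inr h)
  · rintro (⟨i, hi⟩ | ⟨e, he, hv⟩ | h)
    · exact Or.inl (Or.inl ⟨i, hi.symm⟩)
    · exact Or.inl (Or.inr ⟨e, he, hv⟩)
    · exact Or.inr h

/-- shape classification of members of votes18 -/
def lastD {n : ℕ} (E' : Finset (Fin n × Fin n)) (e : Fin n × Fin n) : Fin (n + 1) :=
  if e ∈ E' then Fin.last n else ⟨n - 1, by omega⟩

lemma votes18_cases {E E' : Finset (Fin n × Fin n)} {k : ℕ} {v : Vote18 n} (hn : 0 < n)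
    (hv : v ∈ votes18 E E' k) :
    (∃ i j, v = (aC i, bC j)) ∨
    (∃ e ∈ E, v = (bC e.2, dC e 0)) ∨
    (∃ e ∈ E, ∃ t : Fin n, t.1 + 1 ≤ (lastD E' e).1 ∧ v = (dC e t.castSucc, dC e t.succ)) ∨
    (∃ e ∈ E, v = (dC e (lastD E' e), aC e.1)) ∨
    v = (rC n, rhatC n) := by
  rcases (mem_votes18 hn).1 hv with ⟨i, hi⟩ | ⟨e, he, hv⟩ | h
  · exact Or.inl ⟨i, i, hi⟩
  · by_cases hr : e ∈ E'
    · rw [if_pos hr] at hv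
      rcases mem_redChain.1 hv with h | ⟨t, ht⟩ | h | h
      · exact Or.inr (Or.inl ⟨e, he, h⟩)
      · exact Or.inr (Or.inr (Or.inl ⟨e, he, t, by simp [lastD, hr], ht⟩))
      · exact Or.inr (Or.inr (Or.inr (Or.inl ⟨e, he, by simp [lastD, hr, h]⟩)))
      · exact Or.inl ⟨e.1, e.2, h⟩
    · rw [if_neg hr] at hv
      rcases mem_plainChain.1 hv with h | ⟨t, ht, ht2⟩ | h | h
      · exact Or.inr (Or.inl ⟨e, he, h⟩)
      · exact Or.inr (Or.inr (Or.inl ⟨e, he, t, by simp [lastD, hr]; omega, ht2⟩))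
      · exact Or.inr (Or.inr (Or.inr (Or.inl ⟨e, he, by simp [lastD, hr, h]⟩)))
      · exact Or.inl ⟨e.1, e.2, h⟩
  · exact Or.inr (Or.inr (Or.inr (Or.inr h)))


lemma wtsum_map_red (e : Fin n × Fin n) (c : Cand18 n) :
    (((Finset.univ : Finset (Fin n)).val.map
        (fun t => (dC e t.castSucc, dC e t.succ))).map (fun v => wt v c)).sum =
      (if dC e 0 = c then (1:ℤ) else 0) - (if dC e (Fin.last n) = c then 1 else 0) := by
  rw [Multiset.map_map]
  have : (((Finset.univ : Finset (Fin n)).val.map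
      ((fun v => wt v c) ∘ (fun t => (dC e t.castSucc, dC e t.succ))))).sum =
      ∑ t : Fin n, ((if dC e t.castSucc = c then (1:ℤ) else 0)
        - (if dC e t.succ = c then 1 else 0)) := rfl
  rw [this, Finset.sum_sub_distrib]
  have h1 : ∑ t : Fin n, (if dC e t.castSucc = c then (1:ℤ) else 0) =
      (∑ t : Fin (n+1), (if dC e t = c then (1:ℤ) else 0)) -
        (if dC e (Fin.last n) = c then 1 else 0) := by
    rw [Fin.sum_univ_castSucc (f := fun t => (if dC e t = c then (1:ℤ) else 0))]; ring
  have h2 : ∑ t : Fin n, (if dC e t.succ = c then (1:ℤ) else 0) =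
      (∑ t : Fin (n+1), (if dC e t = c then (1:ℤ) else 0)) -
        (if dC e 0 = c then 1 else 0) := by
    rw [Fin.sum_univ_succ (f := fun t => (if dC e t = c then (1:ℤ) else 0))]; ring
  rw [h1, h2]; ring

lemma wtsum_map_plain (hn : 0 < n) (e : Fin n × Fin n) (c : Cand18 n) :
    ((((Finset.univ.filter (fun t : Fin n => t.1 + 1 < n)).val.map
        (fun t => (dC e t.castSucc, dC e t.succ)))).map (fun v => wt v c)).sum =
      (if dC e 0 = c then (1:ℤ) else 0) - (if dC e ⟨n - 1, by omega⟩ = c then 1 else 0) := by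
  rw [Multiset.map_map]
  set F : ℕ → ℤ := fun m => if h : m ≤ n then (if dC e ⟨m, by omega⟩ = c then (1:ℤ) else 0) else 0 with hF
  have key : (((Finset.univ.filter (fun t : Fin n => t.1 + 1 < n)).val.map
      ((fun v => wt v c) ∘ (fun t => (dC e t.castSucc, dC e t.succ))))).sum =
      ∑ t ∈ Finset.univ.filter (fun t : Fin n => t.1 + 1 < n),
        (F t.1 - F (t.1 + 1)) := by
    rw [show (((Finset.univ.filter (fun t : Fin n => t.1 + 1 < n)).val.map
      ((fun v => wt v c) ∘ (fun t => (dC e t.castSucc, dC e t.succ))))).sum =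
      ∑ t ∈ Finset.univ.filter (fun t : Fin n => t.1 + 1 < n),
        wt (dC e t.castSucc, dC e t.succ) c from rfl]
    refine Finset.sum_congr rfl (fun t ht => ?_)
    simp only [Finset.mem_filter] at ht
    have h1 : t.1 ≤ n := le_of_lt t.2
    have h2 : t.1 + 1 ≤ n := by omega
    have e1 : (t.castSucc : Fin (n+1)) = ⟨t.1, by omega⟩ := by ext; simp
    have e2 : (t.succ : Fin (n+1)) = ⟨t.1 + 1, by omega⟩ := by ext; simp
    simp only [wt, hF, dif_pos h1, dif_pos h2, e1, e2]
  rw [key]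
  have conv1 : ∑ t ∈ Finset.univ.filter (fun t : Fin n => t.1 + 1 < n),
      (F t.1 - F (t.1 + 1)) =
      ∑ m ∈ (Finset.range n).filter (fun m => m + 1 < n), (F m - F (m + 1)) := by
    rw [Finset.sum_filter, Finset.sum_filter, Fin.sum_univ_eq_sum_range
      (fun m => if m + 1 < n then F m - F (m+1) else 0)]
  rw [conv1, show (Finset.range n).filter (fun m => m + 1 < n) = Finset.range (n-1) by
      ext m; simp; omega,
    Finset.sum_range_sub' F (n-1)]
  have hn1 : n - 1 ≤ n := by omega
  simp only [hF, dif_pos (Nat.zero_le n), dif_pos hn1]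
  norm_num
  split_ifs <;> simp_all [dC, Fin.ext_iff]

def redChainM {n : ℕ} (e : Fin n × Fin n) : Multiset (Vote18 n) :=
  {(bC e.2, dC e 0)} +
    (Finset.univ : Finset (Fin n)).val.map
      (fun t => (dC e t.castSucc, dC e t.succ)) +
    {(dC e (Fin.last n), aC e.1)}

def plainChainM {n : ℕ} (e : Fin n × Fin n) : Multiset (Vote18 n) :=
  {(bC e.2, dC e 0)} +
    ((Finset.univ.filter (fun t : Fin n => t.1 + 1 < n)).val.map
      (fun t => (dC e t.castSucc, dC e t.succ))) +
    {(dC e ⟨n - 1, by omega⟩, aC e.1)}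

lemma flScore18_singleton (v : Vote18 n) (c : Cand18 n) :
    flScore18 {v} c = wt v c := by
  rw [flScore18_eq]; simp

lemma flScore18_redChainM (e : Fin n × Fin n) (c : Cand18 n) :
    flScore18 (redChainM e) c =
      (if bC e.2 = c then (1:ℤ) else 0) - (if aC e.1 = c then 1 else 0) := by
  rw [flScore18_eq, redChainM]
  simp only [Multiset.map_add, Multiset.sum_add, Multiset.map_singleton, Multiset.sum_singleton]
  rw [wtsum_map_red]
  simp only [wt]
  ring

lemma flScore18_plainChainM (hn : 0 < n) (e : Fin n × Fin n) (c : Cand18 n) :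
    flScore18 (plainChainM e) c =
      (if bC e.2 = c then (1:ℤ) else 0) - (if aC e.1 = c then 1 else 0) := by
  rw [flScore18_eq, plainChainM]
  simp only [Multiset.map_add, Multiset.sum_add, Multiset.map_singleton, Multiset.sum_singleton]
  rw [wtsum_map_plain hn]
  simp only [wt]
  ring

lemma redChain_eq (e : Fin n × Fin n) :
    redChain e = redChainM e + {(aC e.1, bC e.2)} := by
  simp only [redChain, redChainM, Multiset.insert_eq_cons, add_assoc, Multiset.singleton_add]

lemma plainChain_eq (e : Fin n × Fin n) :
    plainChain e = plainChainM e + {(aC e.1, bC e.2)} := by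
  simp only [plainChain, plainChainM, Multiset.insert_eq_cons, add_assoc, Multiset.singleton_add]

lemma flScore18_redChain (e : Fin n × Fin n) (c : Cand18 n) :
    flScore18 (redChain e) c = 0 := by
  rw [redChain_eq, flScore18_add, flScore18_redChainM]
  rw [flScore18_singleton]
  simp only [wt]
  ring

lemma flScore18_plainChain (hn : 0 < n) (e : Fin n × Fin n) (c : Cand18 n) :
    flScore18 (plainChain e) c = 0 := by
  rw [plainChain_eq, flScore18_add, flScore18_plainChainM hn]
  rw [flScore18_singleton]
  simp only [wt]
  ring


lemma flScore18_votesBase (hn : 0 < n) (E E' : Finset (Fin n × Fin n)) (c : Cand18 n) :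
    flScore18 (votesBase E E') c =
      ∑ i : Fin n, ((if aC i = c then (1:ℤ) else 0) - (if bC i = c then 1 else 0)) := by
  rw [votesBase, flScore18_add]
  have h1 : flScore18 ((Finset.univ : Finset (Fin n)).val.map (fun i => (aC i, bC i))) c =
      ∑ i : Fin n, ((if aC i = c then (1:ℤ) else 0) - (if bC i = c then 1 else 0)) := by
    rw [flScore18_eq, Multiset.map_map]
    rfl
  have h2 : flScore18 (E.val.bind (fun e => if e ∈ E' then redChain e else plainChain e)) c
      = 0 := by
    rw [flScore18_eq, Multiset.map_bind, Multiset.sum_bind]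
    rw [show (Multiset.map (fun e => (Multiset.map (fun v => wt v c)
        (if e ∈ E' then redChain e else plainChain e)).sum) E.val).sum =
      ∑ e ∈ E, flScore18 (if e ∈ E' then redChain e else plainChain e) c from by
        rw [Finset.sum_congr rfl (fun e _ => (flScore18_eq _ c))]; rfl]
    refine Finset.sum_eq_zero (fun e _ => ?_)
    by_cases hr : e ∈ E'
    · rw [if_pos hr, flScore18_redChain]
    · rw [if_neg hr, flScore18_plainChain hn]
  rw [h1, h2, add_zero]

lemma base_score_a (hn : 0 < n) (E E' : Finset (Fin n × Fin n)) (i0 : Fin n) :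
    flScore18 (votesBase E E') (aC i0) = 1 := by
  rw [flScore18_votesBase hn]
  rw [Finset.sum_congr rfl (fun i _ => show
      ((if aC i = aC i0 then (1:ℤ) else 0) - (if bC i = aC i0 then 1 else 0)) =
      if i = i0 then 1 else 0 from by simp [aC, bC])]
  simp

lemma base_score_b (hn : 0 < n) (E E' : Finset (Fin n × Fin n)) (j0 : Fin n) :
    flScore18 (votesBase E E') (bC j0) = -1 := by
  rw [flScore18_votesBase hn]
  rw [Finset.sum_congr rfl (fun i _ => show
      ((if aC i = bC j0 then (1:ℤ) else 0) - (if bC i = bC j0 then 1 else 0)) =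
      if i = j0 then -1 else 0 from by by_cases h : i = j0 <;> simp [aC, bC, h])]
  simp

lemma base_score_other (hn : 0 < n) (E E' : Finset (Fin n × Fin n)) (c : Cand18 n)
    (h1 : ∀ i, c ≠ aC i) (h2 : ∀ j, c ≠ bC j) :
    flScore18 (votesBase E E') c = 0 := by
  rw [flScore18_votesBase hn]
  refine Finset.sum_eq_zero (fun i _ => ?_)
  rw [if_neg (fun h => h1 i h.symm), if_neg (fun h => h2 i h.symm)]
  ring

lemma sum_flScore18 (V : Multiset (Vote18 n)) :
    ∑ c : Cand18 n, flScore18 V c = 0 := by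
  have : ∀ v : Vote18 n, ∑ c : Cand18 n, wt v c = 0 := by
    intro v
    simp only [wt, Finset.sum_sub_distrib]
    rw [Finset.sum_ite_eq Finset.univ v.1 (fun _ => (1:ℤ)),
      Finset.sum_ite_eq Finset.univ v.2 (fun _ => (1:ℤ))]
    simp
  induction V using Multiset.induction with
  | empty => simp [flScore18]
  | cons a s ih =>
    have : ∀ c, flScore18 (a ::ₘ s) c = wt a c + flScore18 s c := by
      intro c
      rw [show (a ::ₘ s) = {a} + s from by simp [Multiset.singleton_add],
        flScore18_add, flScore18_singleton]
    rw [Finset.sum_congr rfl (fun c _ => this c), Finset.sum_add_distrib, ih, add_zero]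
    exact ‹∀ v : Vote18 n, ∑ c : Cand18 n, wt v c = 0› a

lemma card_eq_sum_countP_fst (V : Multiset (Vote18 n)) :
    (Multiset.card V : ℕ) = ∑ c : Cand18 n, V.countP (fun v => v.1 = c) := by
  induction V using Multiset.induction with
  | empty => simp
  | cons a s ih =>
    simp only [Multiset.card_cons, Multiset.countP_cons, Finset.sum_add_distrib, ← ih]
    rw [Finset.sum_ite_eq Finset.univ a.1 (fun _ => 1)]
    simp

lemma countP_mem_sum {A : Multiset (Vote18 n)} (S : Finset (Vote18 n)) :
    A.countP (fun v => v ∈ S) = ∑ u ∈ S, A.count u := by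
  induction A using Multiset.induction with
  | empty => simp
  | cons a s ih =>
    simp only [Multiset.countP_cons, Multiset.count_cons, Finset.sum_add_distrib, ih]
    congr 1
    rw [Finset.sum_ite_eq' S a (fun _ => 1)]


lemma count_eq_countP' (u : Vote18 n) (A : Multiset (Vote18 n)) :
    A.count u = A.countP (fun v => v = u) := by
  induction A using Multiset.induction with
  | empty => simp
  | cons a s ih =>
    simp only [Multiset.count_cons, Multiset.countP_cons, ih]
    congr 1
    by_cases h : a = u
    · simp [h]
    · rw [if_neg h, if_neg (fun hh => h hh.symm)]

variable {E E' : Finset (Fin n × Fin n)} {k : ℕ} {A : Multiset (Vote18 n)}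

lemma countP_shape_zero (hA : ∀ v ∈ A, v ∈ votes18 E E' k) (p : Vote18 n → Prop)
    [DecidablePred p] (h : ∀ v ∈ votes18 E E' k, ¬ p v) : A.countP p = 0 :=
  Multiset.countP_eq_zero.mpr fun v hv => h v (hA v hv)

lemma countP_shape_count (hA : ∀ v ∈ A, v ∈ votes18 E E' k) (p : Vote18 n → Prop)
    [DecidablePred p] (u : Vote18 n) (h : ∀ v ∈ votes18 E E' k, p v ↔ v = u) :
    A.countP p = A.count u := by
  rw [count_eq_countP']
  exact Multiset.countP_congr rfl (fun v hv => propext (h v (hA v hv)))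

lemma countP_shape_sum (hA : ∀ v ∈ A, v ∈ votes18 E E' k) (p : Vote18 n → Prop)
    [DecidablePred p] (S : Finset (Vote18 n)) (h : ∀ v ∈ votes18 E E' k, p v ↔ v ∈ S) :
    A.countP p = ∑ u ∈ S, A.count u := by
  rw [← countP_mem_sum]
  exact Multiset.countP_congr rfl (fun v hv => propext (h v (hA v hv)))

lemma lastD_le (e : Fin n × Fin n) : (lastD E' e).1 ≤ n := by
  exact Nat.lt_succ_iff.mp (lastD E' e).isLt

def dN (e : Fin n × Fin n) (m : ℕ) : Cand18 n := dC e ⟨min m n, by omega⟩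

def cv (E' : Finset (Fin n × Fin n)) (e : Fin n × Fin n) (m : ℕ) : Vote18 n :=
  if m = 0 then (bC e.2, dN e 0)
  else if m ≤ (lastD E' e).1 then (dN e (m-1), dN e m)
  else (dN e (lastD E' e).1, aC e.1)

lemma cv_zero (e : Fin n × Fin n) : cv E' e 0 = (bC e.2, dC e 0) := by
  rw [cv, if_pos rfl, dN]
  congr 2

lemma cv_last (e : Fin n × Fin n) :
    cv E' e ((lastD E' e).1 + 1) = (dC e (lastD E' e), aC e.1) := by
  have h := lastD_le (E' := E') e
  rw [cv, if_neg (by omega), if_neg (by omega), dN]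
  congr 2
  ext
  simp [Nat.min_eq_left h]

lemma dC_congr (e : Fin n × Fin n) {s t : Fin (n+1)} (h : s.1 = t.1) :
    dC (n := n) e s = dC e t := by
  congr 1
  ext
  exact h

lemma cv_mid (e : Fin n × Fin n) {m : ℕ} (h1 : 1 ≤ m) (h2 : m ≤ (lastD E' e).1) :
    cv E' e m = (dC e ⟨m - 1, by have := lastD_le (E' := E') e; omega⟩,
      dC e ⟨m, by have := lastD_le (E' := E') e; omega⟩) := by
  have h := lastD_le (E' := E') e
  rw [cv, if_neg (by omega), if_pos h2, dN, dN]
  have a1 : (m - 1) ⊓ n = m - 1 := by omega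
  have a2 : m ⊓ n = m := by omega
  rw [Prod.mk.injEq]
  exact ⟨dC_congr e (by simp [a1]), dC_congr e (by simp [a2])⟩

lemma bot_a (hn : 0 < n) (hA : ∀ v ∈ A, v ∈ votes18 E E' k) (i : Fin n) :
    A.countP (fun v => v.2 = aC i) =
      ∑ e ∈ E.filter (fun e => e.1 = i), A.count (dC e (lastD E' e), aC e.1) := by
  rw [countP_shape_sum hA _
    ((E.filter (fun e => e.1 = i)).image (fun e => (dC e (lastD E' e), aC e.1))) ?_]
  · rw [Finset.sum_image]
    intro e1 h1 e2 h2 h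
    simp only [Prod.mk.injEq, dC, Sum.inr.injEq, Sum.inl.injEq, Prod.mk.injEq] at h
    exact h.1.1
  · intro v hv
    constructor
    · intro h
      rcases votes18_cases hn hv with ⟨i',j',rfl⟩|⟨e,he,rfl⟩|⟨e,he,t,ht,rfl⟩|⟨e,he,rfl⟩|rfl
      · exact absurd h (by simp [aC, bC])
      · exact absurd h (by simp [aC, dC])
      · exact absurd h (by simp [aC, dC])
      · have : e.1 = i := by simpa [aC] using h
        exact Finset.mem_image.mpr ⟨e, Finset.mem_filter.mpr ⟨he, this⟩, rfl⟩
      · exact absurd h (by simp [aC, rhatC])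
    · intro h
      rcases Finset.mem_image.mp h with ⟨e, he, rfl⟩
      simp only [Finset.mem_filter] at he
      simp [aC, he.2]

lemma top_b (hn : 0 < n) (hA : ∀ v ∈ A, v ∈ votes18 E E' k) (j : Fin n) :
    A.countP (fun v => v.1 = bC j) =
      ∑ e ∈ E.filter (fun e => e.2 = j), A.count (bC e.2, dC e 0) := by
  rw [countP_shape_sum hA _
    ((E.filter (fun e => e.2 = j)).image (fun e => ((bC e.2 : Cand18 n), dC e 0))) ?_]
  · rw [Finset.sum_image]
    intro e1 h1 e2 h2 h
    simp only [Prod.mk.injEq, dC, bC, Sum.inr.injEq, Sum.inl.injEq, Prod.mk.injEq] at h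
    exact h.2.1
  · intro v hv
    constructor
    · intro h
      rcases votes18_cases hn hv with ⟨i',j',rfl⟩|⟨e,he,rfl⟩|⟨e,he,t,ht,rfl⟩|⟨e,he,rfl⟩|rfl
      · exact absurd h (by simp [aC, bC])
      · have : e.2 = j := by simpa [bC] using h
        exact Finset.mem_image.mpr ⟨e, Finset.mem_filter.mpr ⟨he, this⟩, rfl⟩
      · exact absurd h (by simp [bC, dC])
      · exact absurd h (by simp [bC, dC])
      · exact absurd h (by simp [bC, rC])
    · intro h
      rcases Finset.mem_image.mp h with ⟨e, he, rfl⟩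
      simp only [Finset.mem_filter] at he
      simp [bC, he.2]

lemma bot_b_shape (hn : 0 < n) {v : Vote18 n} (hv : v ∈ votes18 E E' k) (j : Fin n)
    (h : v.2 = bC j) : ∃ i, v.1 = aC i := by
  rcases votes18_cases hn hv with ⟨i',j',rfl⟩|⟨e,he,rfl⟩|⟨e,he,t,ht,rfl⟩|⟨e,he,rfl⟩|rfl
  · exact ⟨i', rfl⟩
  · exact absurd h (by simp [bC, dC])
  · exact absurd h (by simp [bC, dC])
  · exact absurd h (by simp [aC, bC])
  · exact absurd h (by simp [bC, rhatC])

lemma top_d (hn : 0 < n) (hA : ∀ v ∈ A, v ∈ votes18 E E' k) {e0 : Fin n × Fin n}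
    (he0 : e0 ∈ E) (t0 : Fin (n + 1)) :
    A.countP (fun v => v.1 = dC e0 t0) =
      if t0.1 ≤ (lastD E' e0).1 then A.count (cv E' e0 (t0.1 + 1)) else 0 := by
  have hL := lastD_le (E' := E') e0
  by_cases hle : t0.1 ≤ (lastD E' e0).1
  · rw [if_pos hle]
    refine countP_shape_count hA _ _ (fun v hv => ?_)
    constructor
    · intro h
      rcases votes18_cases hn hv with ⟨i',j',rfl⟩|⟨e,he,rfl⟩|⟨e,he,t,ht,rfl⟩|⟨e,he,rfl⟩|rfl
      · exact absurd h (by simp [aC, dC])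
      · exact absurd h (by simp [bC, dC])
      · have h' : e = e0 ∧ t.castSucc = t0 := by
          simpa [dC, Prod.ext_iff] using h
        obtain ⟨rfl, ht0⟩ := h'
        have h1 : t0.1 = t.1 := by rw [← ht0]; simp
        have ht' : t0.1 + 1 ≤ (lastD E' e).1 := by omega
        rw [cv_mid e (by omega) ht']
        refine Prod.ext ?_ ?_
        · exact dC_congr e (by simp [h1])
        · exact dC_congr e (by simp [h1])
      · have h' : e = e0 ∧ lastD E' e = t0 := by
          simpa [dC, Prod.ext_iff] using h
        obtain ⟨rfl, ht0⟩ := h'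
        have h1 : t0.1 = (lastD E' e).1 := by rw [← ht0]
        rw [h1, cv_last]
      · exact absurd h (by simp [dC, rC])
    · intro h
      subst h
      by_cases hm : t0.1 + 1 ≤ (lastD E' e0).1
      · rw [cv_mid e0 (by omega) hm]
        exact dC_congr e0 (by simp)
      · have h1 : t0.1 = (lastD E' e0).1 := by omega
        rw [h1, cv_last]
        exact dC_congr e0 h1.symm
  · rw [if_neg hle]
    refine countP_shape_zero hA _ (fun v hv h => ?_)
    rcases votes18_cases hn hv with ⟨i',j',rfl⟩|⟨e,he,rfl⟩|⟨e,he,t,ht,rfl⟩|⟨e,he,rfl⟩|rfl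
    · exact absurd h (by simp [aC, dC])
    · exact absurd h (by simp [bC, dC])
    · have h' : e = e0 ∧ t.castSucc = t0 := by simpa [dC, Prod.ext_iff] using h
      obtain ⟨rfl, ht0⟩ := h'
      have h1 : t0.1 = t.1 := by rw [← ht0]; simp
      omega
    · have h' : e = e0 ∧ lastD E' e = t0 := by simpa [dC, Prod.ext_iff] using h
      obtain ⟨rfl, ht0⟩ := h'
      have h1 : t0.1 = (lastD E' e).1 := by rw [← ht0]
      omega
    · exact absurd h (by simp [dC, rC])

lemma bot_d (hn : 0 < n) (hA : ∀ v ∈ A, v ∈ votes18 E E' k) {e0 : Fin n × Fin n}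
    (he0 : e0 ∈ E) (t0 : Fin (n + 1)) :
    A.countP (fun v => v.2 = dC e0 t0) =
      if t0.1 ≤ (lastD E' e0).1 then A.count (cv E' e0 t0.1) else 0 := by
  have hL := lastD_le (E' := E') e0
  by_cases hle : t0.1 ≤ (lastD E' e0).1
  · rw [if_pos hle]
    refine countP_shape_count hA _ _ (fun v hv => ?_)
    constructor
    · intro h
      rcases votes18_cases hn hv with ⟨i',j',rfl⟩|⟨e,he,rfl⟩|⟨e,he,t,ht,rfl⟩|⟨e,he,rfl⟩|rfl
      · exact absurd h (by simp [bC, dC])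
      · have h' : e = e0 ∧ (0 : Fin (n+1)) = t0 := by simpa [dC, Prod.ext_iff] using h
        obtain ⟨rfl, ht0⟩ := h'
        have h1 : t0.1 = 0 := by rw [← ht0]; simp
        rw [h1, cv_zero]
      · have h' : e = e0 ∧ t.succ = t0 := by simpa [dC, Prod.ext_iff] using h
        obtain ⟨rfl, ht0⟩ := h'
        have h1 : t0.1 = t.1 + 1 := by rw [← ht0]; simp
        rw [cv_mid e (by omega) (by omega)]
        refine Prod.ext ?_ ?_
        · exact dC_congr e (by simp [h1])
        · exact dC_congr e (by simp [h1])
      · exact absurd h (by simp [aC, dC])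
      · exact absurd h (by simp [dC, rhatC])
    · intro h
      subst h
      by_cases hz : t0.1 = 0
      · rw [hz, cv_zero]
        exact dC_congr e0 (by simp [hz])
      · rw [cv_mid e0 (by omega) hle]
  · rw [if_neg hle]
    refine countP_shape_zero hA _ (fun v hv h => ?_)
    rcases votes18_cases hn hv with ⟨i',j',rfl⟩|⟨e,he,rfl⟩|⟨e,he,t,ht,rfl⟩|⟨e,he,rfl⟩|rfl
    · exact absurd h (by simp [bC, dC])
    · have h' : e = e0 ∧ (0 : Fin (n+1)) = t0 := by simpa [dC, Prod.ext_iff] using h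
      obtain ⟨rfl, ht0⟩ := h'
      have h1 : t0.1 = 0 := by rw [← ht0]; simp
      omega
    · have h' : e = e0 ∧ t.succ = t0 := by simpa [dC, Prod.ext_iff] using h
      obtain ⟨rfl, ht0⟩ := h'
      have h1 : t0.1 = t.1 + 1 := by rw [← ht0]; simp
      omega
    · exact absurd h (by simp [aC, dC])
    · exact absurd h (by simp [dC, rhatC])

lemma d_notmem_top (hn : 0 < n) (hA : ∀ v ∈ A, v ∈ votes18 E E' k) {e0 : Fin n × Fin n}
    (he0 : e0 ∉ E) (t0 : Fin (n + 1)) :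
    A.countP (fun v => v.1 = dC e0 t0) = 0 := by
  refine countP_shape_zero hA _ (fun v hv h => ?_)
  rcases votes18_cases hn hv with ⟨i',j',rfl⟩|⟨e,he,rfl⟩|⟨e,he,t,ht,rfl⟩|⟨e,he,rfl⟩|rfl
  · exact absurd h (by simp [aC, dC])
  · exact absurd h (by simp [bC, dC])
  · have h' : e = e0 ∧ t.castSucc = t0 := by simpa [dC, Prod.ext_iff] using h
    exact he0 (h'.1 ▸ he)
  · have h' : e = e0 ∧ lastD E' e = t0 := by simpa [dC, Prod.ext_iff] using h
    exact he0 (h'.1 ▸ he)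
  · exact absurd h (by simp [dC, rC])

lemma top_p (hn : 0 < n) (hA : ∀ v ∈ A, v ∈ votes18 E E' k) :
    A.countP (fun v => v.1 = pC n) = 0 := by
  refine countP_shape_zero hA _ (fun v hv h => ?_)
  rcases votes18_cases hn hv with ⟨i',j',rfl⟩|⟨e,he,rfl⟩|⟨e,he,t,ht,rfl⟩|⟨e,he,rfl⟩|rfl <;>
    exact absurd h (by simp [aC, bC, dC, pC, rC])

lemma bot_p (hn : 0 < n) (hA : ∀ v ∈ A, v ∈ votes18 E E' k) :
    A.countP (fun v => v.2 = pC n) = 0 := by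
  refine countP_shape_zero hA _ (fun v hv h => ?_)
  rcases votes18_cases hn hv with ⟨i',j',rfl⟩|⟨e,he,rfl⟩|⟨e,he,t,ht,rfl⟩|⟨e,he,rfl⟩|rfl <;>
    exact absurd h (by simp [aC, bC, dC, pC, rhatC])

lemma top_r (hn : 0 < n) (hA : ∀ v ∈ A, v ∈ votes18 E E' k) :
    A.countP (fun v => v.1 = rC n) = A.count (rC n, rhatC n) := by
  refine countP_shape_count hA _ _ (fun v hv => ?_)
  constructor
  · intro h
    rcases votes18_cases hn hv with ⟨i',j',rfl⟩|⟨e,he,rfl⟩|⟨e,he,t,ht,rfl⟩|⟨e,he,rfl⟩|rfl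
    · exact absurd h (by simp [aC, rC])
    · exact absurd h (by simp [bC, rC])
    · exact absurd h (by simp [dC, rC])
    · exact absurd h (by simp [dC, rC])
    · rfl
  · intro h; subst h; rfl

lemma bot_r (hn : 0 < n) (hA : ∀ v ∈ A, v ∈ votes18 E E' k) :
    A.countP (fun v => v.2 = rC n) = 0 := by
  refine countP_shape_zero hA _ (fun v hv h => ?_)
  rcases votes18_cases hn hv with ⟨i',j',rfl⟩|⟨e,he,rfl⟩|⟨e,he,t,ht,rfl⟩|⟨e,he,rfl⟩|rfl <;>
    exact absurd h (by simp [aC, bC, dC, rC, rhatC])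

lemma top_rhat (hn : 0 < n) (hA : ∀ v ∈ A, v ∈ votes18 E E' k) :
    A.countP (fun v => v.1 = rhatC n) = 0 := by
  refine countP_shape_zero hA _ (fun v hv h => ?_)
  rcases votes18_cases hn hv with ⟨i',j',rfl⟩|⟨e,he,rfl⟩|⟨e,he,t,ht,rfl⟩|⟨e,he,rfl⟩|rfl <;>
    exact absurd h (by simp [aC, bC, dC, rC, rhatC])


lemma notmem_votesBase (hn : 0 < n) : (rC n, rhatC n) ∉ votesBase E E' := by
  intro h
  simp only [votesBase, Multiset.mem_add, Multiset.mem_map, Finset.mem_val,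
    Multiset.mem_bind] at h
  rcases h with ⟨i, _, hi⟩ | ⟨e, he, hv⟩
  · exact absurd hi (by simp [aC, rC, Prod.ext_iff])
  · by_cases hr : e ∈ E'
    · rw [if_pos hr] at hv
      rcases mem_redChain.1 hv with h | ⟨t, ht⟩ | h | h <;>
        simp_all [aC, bC, dC, rC, rhatC, Prod.ext_iff]
    · rw [if_neg hr] at hv
      rcases mem_plainChain.1 hv with h | ⟨t, ht, ht2⟩ | h | h <;>
        simp_all [aC, bC, dC, rC, rhatC, Prod.ext_iff]

lemma count_rr_votes18 (hn : 0 < n) :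
    (votes18 E E' k).count (rC n, rhatC n) = n * (n + 1) + k := by
  rw [votes18_eq, Multiset.count_add,
    Multiset.count_eq_zero.mpr (notmem_votesBase hn), Multiset.count_replicate, if_pos rfl,
    zero_add]

lemma scores_zero (hn : 0 < n) {W : Multiset (Vote18 n)}
    (hmem : ∀ v ∈ W, v ∈ votes18 E E' k)
    (hw : ∀ c, flScore18 W c ≤ flScore18 W (pC n)) : ∀ c, flScore18 W c = 0 := by
  have hp : flScore18 W (pC n) = 0 := by
    rw [flScore18, top_p hn hmem, bot_p hn hmem]; simp
  have h1 : ∀ c', flScore18 W c' ≤ 0 := fun c' => (hw c').trans hp.le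
  intro c
  by_contra hne
  have hlt : flScore18 W c < 0 := lt_of_le_of_ne (h1 c) hne
  have h2 : ∑ c' : Cand18 n, flScore18 W c' < ∑ _c' : Cand18 n, (0:ℤ) :=
    Finset.sum_lt_sum (fun i _ => h1 i) ⟨c, Finset.mem_univ c, hlt⟩
  rw [sum_flScore18] at h2
  simp at h2

lemma r_analysis (hn : 0 < n) {R : Multiset (Vote18 n)} (hR : R ≤ votes18 E E' k)
    (hcard : Multiset.card R ≤ n * (n + 1) + k) {A : Multiset (Vote18 n)}
    (hAc : Multiset.card A = Multiset.card R) (hA : ∀ v ∈ A, v ∈ votes18 E E' k)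
    (hw : ∀ c, flScore18 (votes18 E E' k - R + A) c ≤
        flScore18 (votes18 E E' k - R + A) (pC n)) :
    R = Multiset.replicate (n * (n + 1) + k) (rC n, rhatC n) ∧
      A.count (rC n, rhatC n) = 0 ∧ Multiset.card A = n * (n + 1) + k := by
  set W := votes18 E E' k - R + A with hW
  have hmem : ∀ v ∈ W, v ∈ votes18 E E' k := by
    intro v hv
    rcases Multiset.mem_add.1 hv with h | h
    · exact Multiset.mem_of_le (Multiset.sub_le_self _ _) h
    · exact hA v h
  have hz := scores_zero hn hmem hw
  have hr : flScore18 W (rC n) = W.count (rC n, rhatC n) := by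
    rw [flScore18, top_r hn hmem, bot_r hn hmem]
    simp
  have hcnt : W.count (rC n, rhatC n) = 0 := by
    have := hz (rC n)
    rw [hr] at this
    exact_mod_cast this
  have hcntW : W.count (rC n, rhatC n) =
      (n * (n + 1) + k) - R.count (rC n, rhatC n) + A.count (rC n, rhatC n) := by
    rw [hW, Multiset.count_add, Multiset.count_sub, count_rr_votes18 hn]
  have hRle : R.count (rC n, rhatC n) ≤ n * (n + 1) + k := by
    have := Multiset.count_le_of_le (rC n, rhatC n) hR
    rwa [count_rr_votes18 hn] at this
  have hRcard : R.count (rC n, rhatC n) ≤ Multiset.card R := Multiset.count_le_card _ _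
  have hAcnt : A.count (rC n, rhatC n) = 0 := by omega
  have hRcnt : R.count (rC n, rhatC n) = n * (n + 1) + k := by omega
  have hRcard' : Multiset.card R = n * (n + 1) + k := by omega
  refine ⟨?_, hAcnt, by omega⟩
  rw [Multiset.eq_replicate]
  refine ⟨hRcard', fun b hb => ?_⟩
  have := Multiset.count_eq_card.mp (by omega : R.count (rC n, rhatC n) = Multiset.card R)
  exact (this b hb).symm

lemma sub_replicate (E E' : Finset (Fin n × Fin n)) (k : ℕ) :
    votes18 E E' k - Multiset.replicate (n * (n + 1) + k) (rC n, rhatC n) =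
      votesBase E E' := by
  rw [votes18_eq, add_tsub_cancel_right]


lemma chain_const (hn : 0 < n) (hA : ∀ v ∈ A, v ∈ votes18 E E' k)
    (hAs : ∀ e ∈ E, ∀ t : Fin (n + 1), flScore18 A (dC e t) = 0) :
    ∀ e ∈ E, ∀ m, m ≤ (lastD E' e).1 + 1 →
      A.count (cv E' e m) = A.count (cv E' e 0) := by
  intro e he m
  induction m with
  | zero => intro _; rfl
  | succ m ih =>
    intro hm
    have hL := lastD_le (E' := E') e
    have hmL : m ≤ (lastD E' e).1 := by omega
    have hs := hAs e he ⟨m, by omega⟩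
    rw [flScore18, top_d hn hA he, bot_d hn hA he,
      if_pos (show ((⟨m, by omega⟩ : Fin (n+1))).1 ≤ (lastD E' e).1 from hmL),
      if_pos (show ((⟨m, by omega⟩ : Fin (n+1))).1 ≤ (lastD E' e).1 from hmL)] at hs
    have hs' : (A.count (cv E' e (m+1)) : ℤ) = (A.count (cv E' e m) : ℤ) :=
      sub_eq_zero.mp hs
    rw [← ih (by omega)]
    exact_mod_cast hs'

lemma forward_main (hn : 0 < n) (hk : k ≤ n + 1) (hE' : E' ⊆ E)
    (hA : ∀ v ∈ A, v ∈ votes18 E E' k)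
    (hcard : Multiset.card A = n * (n + 1) + k)
    (hz : ∀ c, flScore18 (votesBase E E' + A) c = 0)
    (hrr : A.count (rC n, rhatC n) = 0) :
    ∃ F ⊆ E, (∀ i : Fin n, (F.filter (fun e => e.1 = i)).card = 1) ∧
      (∀ j : Fin n, (F.filter (fun e => e.2 = j)).card = 1) ∧ (F ∩ E').card = k := by
  classical
  have hAs : ∀ c, flScore18 A c = - flScore18 (votesBase E E') c := by
    intro c
    have := hz c
    rw [flScore18_add] at this
    linarith
  have hAd : ∀ e ∈ E, ∀ t : Fin (n + 1), flScore18 A (dC e t) = 0 := by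
    intro e he t
    rw [hAs, base_score_other hn E E' _ (by simp [dC, aC]) (by simp [dC, bC])]
    ring
  have hchain := chain_const hn hA hAd
  set x : Fin n × Fin n → ℕ := fun e => A.count (cv E' e 0) with hxdef
  -- row equations
  have ha : ∀ i : Fin n, A.countP (fun v => v.1 = aC i) + 1 =
      ∑ e ∈ E.filter (fun e => e.1 = i), x e := by
    intro i
    have h1 := hAs (aC i)
    rw [base_score_a hn, flScore18, bot_a hn hA] at h1
    rw [Finset.sum_congr rfl (fun e he => show A.count (dC e (lastD E' e), aC e.1) = x e from by
      rw [← cv_last (E' := E') e]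
      exact hchain e (Finset.mem_filter.mp he).1 _ le_rfl)] at h1
    have h2 : ((∑ e ∈ E.filter (fun e => e.1 = i), x e : ℕ) : ℤ) =
      (((E.filter (fun e => e.1 = i)).sum x : ℕ) : ℤ) := rfl
    omega
  -- column equations
  have hbcol : ∀ j : Fin n, (∑ e ∈ E.filter (fun e => e.2 = j), x e) =
      A.countP (fun v => v.2 = bC j) + 1 := by
    intro j
    have h1 := hAs (bC j)
    rw [base_score_b hn, flScore18, top_b hn hA] at h1
    rw [Finset.sum_congr rfl (fun e he => show A.count (bC e.2, dC e 0) = x e from by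
      rw [← cv_zero (E' := E') e])] at h1
    have h2 : ((∑ e ∈ E.filter (fun e => e.2 = j), x e : ℕ) : ℤ) =
      (((E.filter (fun e => e.2 = j)).sum x : ℕ) : ℤ) := rfl
    omega
  -- d sums
  have hdsum : ∀ e ∈ E, (∑ t : Fin (n + 1), A.countP (fun v => v.1 = dC e t)) =
      ((lastD E' e).1 + 1) * x e := by
    intro e he
    have hL := lastD_le (E' := E') e
    rw [Finset.sum_congr rfl (fun t _ => top_d hn hA he t)]
    rw [Finset.sum_congr rfl (fun t (_ : t ∈ Finset.univ) =>
      show (if (t : Fin (n+1)).1 ≤ (lastD E' e).1 then A.count (cv E' e (t.1 + 1)) else 0) =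
        (if t.1 ≤ (lastD E' e).1 then x e else 0) from by
      by_cases h : t.1 ≤ (lastD E' e).1
      · rw [if_pos h, if_pos h, hchain e he (t.1 + 1) (by omega)]
      · rw [if_neg h, if_neg h])]
    rw [Fin.sum_univ_eq_sum_range (fun m => if m ≤ (lastD E' e).1 then x e else 0) (n + 1)]
    rw [← Finset.sum_filter]
    rw [show (Finset.range (n + 1)).filter (fun m => m ≤ (lastD E' e).1) =
      Finset.range ((lastD E' e).1 + 1) from by ext m; simp; omega]
    simp [mul_comm]
  -- card decomposition
  have hsplit : ∑ c : Cand18 n, A.countP (fun v => v.1 = c) =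
      (∑ i : Fin n, A.countP (fun v => v.1 = aC i)) +
      ((∑ j : Fin n, A.countP (fun v => v.1 = bC j)) +
      ((∑ et : (Fin n × Fin n) × Fin (n + 1), A.countP (fun v => v.1 = dC et.1 et.2)) +
        A.countP (fun v => v.1 = pC n))) +
      (A.countP (fun v => v.1 = rC n) + A.countP (fun v => v.1 = rhatC n)) := by
    rw [Fintype.sum_sum_type, Fintype.sum_sum_type, Fintype.sum_sum_type,
      Fintype.sum_sum_type, Fintype.sum_bool]
    rw [show (∑ a₂ : Unit, A.countP (fun v => v.1 = Sum.inl (Sum.inr (Sum.inr (Sum.inr a₂)))))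
      = A.countP (fun v => v.1 = pC n) from Fintype.sum_unique _]
    rfl
  have htopp : A.countP (fun v => v.1 = pC n) = 0 := top_p hn hA
  have htoprh : A.countP (fun v => v.1 = rhatC n) = 0 := top_rhat hn hA
  have htopr : A.countP (fun v => v.1 = rC n) = 0 := by rw [top_r hn hA, hrr]
  have hdall : (∑ et : (Fin n × Fin n) × Fin (n + 1), A.countP (fun v => v.1 = dC et.1 et.2)) =
      ∑ e ∈ E, ((lastD E' e).1 + 1) * x e := by
    rw [Fintype.sum_prod_type]
    rw [← Finset.sum_subset (Finset.subset_univ E) (fun e _ he => ?_)]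
    · exact Finset.sum_congr rfl (fun e he => hdsum e he)
    · exact Finset.sum_eq_zero (fun t _ => d_notmem_top hn hA he t)
  have hT : (∑ j : Fin n, A.countP (fun v => v.1 = bC j)) = ∑ e ∈ E, x e := by
    rw [Finset.sum_congr rfl (fun j _ => top_b hn hA j)]
    rw [Finset.sum_congr rfl (fun j (_ : j ∈ Finset.univ) =>
      Finset.sum_congr rfl (fun e he => show A.count (bC e.2, dC e 0) = x e from by
        rw [← cv_zero (E' := E') e]))]
    exact Finset.sum_fiberwise E (fun e => e.2) x
  have hrowsum : (∑ e ∈ E, x e) = (∑ i : Fin n, A.countP (fun v => v.1 = aC i)) + n := by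
    rw [← Finset.sum_fiberwise E (fun e => e.1) x]
    rw [Finset.sum_congr rfl (fun i (_ : i ∈ Finset.univ) => (ha i).symm)]
    rw [Finset.sum_add_distrib]
    simp
  have hLsplit : (∑ e ∈ E, ((lastD E' e).1 + 1) * x e) =
      n * (∑ e ∈ E, x e) + ∑ e ∈ E', x e := by
    have h1 : E.filter (fun e => e ∈ E') = E' := by
      rw [Finset.filter_mem_eq_inter, Finset.inter_eq_right.mpr hE']
    have h2 : ∀ e ∈ E, ((lastD E' e).1 + 1) * x e =
        n * x e + (if e ∈ E' then x e else 0) := by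
      intro e _
      by_cases hr : e ∈ E'
      · rw [lastD, if_pos hr, if_pos hr]
        simp [Fin.last]
        ring
      · rw [lastD, if_neg hr, if_neg hr]
        have : n - 1 + 1 = n := by omega
        show (n - 1 + 1) * x e = n * x e + 0
        rw [this, add_zero]
    rw [Finset.sum_congr rfl h2, Finset.sum_add_distrib, ← Finset.sum_filter, h1,
      Finset.mul_sum]
  -- assemble the counting equation
  have heq : n * (n + 1) + k =
      (∑ i : Fin n, A.countP (fun v => v.1 = aC i)) +
      (((∑ i : Fin n, A.countP (fun v => v.1 = aC i)) + n) +
        ((n * ((∑ i : Fin n, A.countP (fun v => v.1 = aC i)) + n) +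
          ∑ e ∈ E', x e) + 0)) + (0 + 0) := by
    rw [← hcard, card_eq_sum_countP_fst, hsplit, htopp, htoprh, htopr, hdall, hLsplit, hT,
      hrowsum]
  have hSa0 : (∑ i : Fin n, A.countP (fun v => v.1 = aC i)) = 0 := by
    by_contra hSne
    have h1 : 0 < ∑ i : Fin n, A.countP (fun v => v.1 = aC i) := Nat.pos_of_ne_zero hSne
    have hmul : n ≤ n * (∑ i : Fin n, A.countP (fun v => v.1 = aC i)) :=
      Nat.le_mul_of_pos_right n h1
    have hexp : n * ((∑ i : Fin n, A.countP (fun v => v.1 = aC i)) + n) =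
        n * (∑ i : Fin n, A.countP (fun v => v.1 = aC i)) + n * n := by ring
    have hexp2 : n * (n + 1) = n * n + n := by ring
    rw [hexp, hexp2] at heq
    omega
  have hK : (∑ e ∈ E', x e) = k := by
    rw [hSa0] at heq
    have hexp : n * ((0:ℕ) + n) = n * n := by ring
    have hexp2 : n * (n + 1) = n * n + n := by ring
    rw [hexp, hexp2] at heq
    omega
  have hai0 : ∀ i : Fin n, A.countP (fun v => v.1 = aC i) = 0 := by
    intro i
    exact (Finset.sum_eq_zero_iff.mp hSa0) i (Finset.mem_univ i)
  have hrow1 : ∀ i : Fin n, (∑ e ∈ E.filter (fun e => e.1 = i), x e) = 1 := by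
    intro i
    rw [← ha i, hai0 i]
  have hb0 : ∀ j : Fin n, A.countP (fun v => v.2 = bC j) = 0 := by
    intro j
    refine Multiset.countP_eq_zero.mpr (fun v hv hcontra => ?_)
    obtain ⟨i, hvi⟩ := bot_b_shape hn (hA v hv) j hcontra
    exact (Multiset.countP_eq_zero.mp (hai0 i) v hv) hvi
  have hcol1 : ∀ j : Fin n, (∑ e ∈ E.filter (fun e => e.2 = j), x e) = 1 := by
    intro j
    rw [hbcol j, hb0 j]
  have hxle : ∀ e ∈ E, x e ≤ 1 := by
    intro e he
    have hmem : e ∈ E.filter (fun e' => e'.1 = e.1) := Finset.mem_filter.mpr ⟨he, rfl⟩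
    have h1 := Finset.single_le_sum (f := x) (fun i _ => Nat.zero_le (x i)) hmem
    rw [hrow1 e.1] at h1
    exact h1
  refine ⟨E.filter (fun e => x e ≠ 0), Finset.filter_subset _ _, ?_, ?_, ?_⟩
  · intro i
    rw [Finset.filter_comm]
    have hsum : (∑ e ∈ (E.filter (fun e => e.1 = i)).filter (fun e => x e ≠ 0), x e) = 1 := by
      rw [Finset.sum_filter_ne_zero]
      exact hrow1 i
    have hall1 : ∀ e ∈ (E.filter (fun e => e.1 = i)).filter (fun e => x e ≠ 0), x e = 1 := by
      intro e he
      have h1 := Finset.mem_filter.mp he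
      have h2 := hxle e (Finset.mem_filter.mp h1.1).1
      omega
    rw [Finset.sum_congr rfl hall1] at hsum
    simpa using hsum
  · intro j
    rw [Finset.filter_comm]
    have hsum : (∑ e ∈ (E.filter (fun e => e.2 = j)).filter (fun e => x e ≠ 0), x e) = 1 := by
      rw [Finset.sum_filter_ne_zero]
      exact hcol1 j
    have hall1 : ∀ e ∈ (E.filter (fun e => e.2 = j)).filter (fun e => x e ≠ 0), x e = 1 := by
      intro e he
      have h1 := Finset.mem_filter.mp he
      have h2 := hxle e (Finset.mem_filter.mp h1.1).1
      omega
    rw [Finset.sum_congr rfl hall1] at hsum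
    simpa using hsum
  · have hFE' : (E.filter (fun e => x e ≠ 0)) ∩ E' = E'.filter (fun e => x e ≠ 0) := by
      ext e
      simp only [Finset.mem_inter, Finset.mem_filter]
      constructor
      · rintro ⟨⟨_, hx⟩, hE⟩; exact ⟨hE, hx⟩
      · rintro ⟨hE, hx⟩; exact ⟨⟨hE' hE, hx⟩, hE⟩
    rw [hFE']
    have hsum : (∑ e ∈ E'.filter (fun e => x e ≠ 0), x e) = k := by
      rw [Finset.sum_filter_ne_zero]
      exact hK
    have hall1 : ∀ e ∈ E'.filter (fun e => x e ≠ 0), x e = 1 := by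
      intro e he
      have h1 := Finset.mem_filter.mp he
      have h2 := hxle e (hE' h1.1)
      omega
    rw [Finset.sum_congr rfl hall1] at hsum
    simpa using hsum



lemma card_filter_fin (hn : 0 < n) :
    (Finset.univ.filter (fun t : Fin n => t.1 + 1 < n)).card = n - 1 := by
  rw [Finset.card_filter]
  rw [Fin.sum_univ_eq_sum_range (fun m => if m + 1 < n then 1 else 0) n]
  rw [← Finset.sum_filter]
  rw [show (Finset.range n).filter (fun m => m + 1 < n) = Finset.range (n - 1) from by
    ext m; simp; omega]
  simp

lemma card_redChainM (e : Fin n × Fin n) : Multiset.card (redChainM e) = n + 2 := by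
  simp [redChainM]

lemma card_plainChainM (hn : 0 < n) (e : Fin n × Fin n) :
    Multiset.card (plainChainM e) = n + 1 := by
  rw [plainChainM, Multiset.card_add, Multiset.card_add, Multiset.card_singleton,
    Multiset.card_singleton, Multiset.card_map,
    show (Multiset.card (Finset.univ.filter (fun t : Fin n => t.1 + 1 < n)).val) = n - 1
      from card_filter_fin hn]
  omega

lemma mem_redChainM_sub {e : Fin n × Fin n} {v : Vote18 n} (h : v ∈ redChainM e) :
    v ∈ redChain e := by
  rw [redChain_eq]
  exact Multiset.mem_add.mpr (Or.inl h)

lemma mem_plainChainM_sub {e : Fin n × Fin n} {v : Vote18 n} (h : v ∈ plainChainM e) :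
    v ∈ plainChain e := by
  rw [plainChain_eq]
  exact Multiset.mem_add.mpr (Or.inl h)

lemma backward_main (hn : 0 < n) (hk : k ≤ n + 1) (hE' : E' ⊆ E)
    {F : Finset (Fin n × Fin n)} (hFE : F ⊆ E)
    (hrow : ∀ i : Fin n, (F.filter (fun e => e.1 = i)).card = 1)
    (hcol : ∀ j : Fin n, (F.filter (fun e => e.2 = j)).card = 1)
    (hinter : (F ∩ E').card = k) :
    ∃ R ≤ votes18 E E' k, Multiset.card R ≤ n * (n + 1) + k ∧
      ∃ A : Multiset (Vote18 n), Multiset.card A = Multiset.card R ∧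
        (∀ v ∈ A, v ∈ votes18 E E' k) ∧
        ∀ c : Cand18 n,
          flScore18 (votes18 E E' k - R + A) c ≤
            flScore18 (votes18 E E' k - R + A) (pC n) := by
  classical
  have hFcard : F.card = n := by
    rw [Finset.card_eq_sum_card_fiberwise (f := fun e => e.1) (t := Finset.univ)
      (fun e _ => Finset.mem_univ _)]
    rw [Finset.sum_congr rfl (fun i _ => hrow i)]
    simp
  set A : Multiset (Vote18 n) :=
    F.val.bind (fun e => if e ∈ E' then redChainM e else plainChainM e) with hAdef
  have hAcard : Multiset.card A = n * (n + 1) + k := by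
    have h1 : Multiset.card A =
        ∑ e ∈ F, Multiset.card (if e ∈ E' then redChainM e else plainChainM e) := by
      rw [hAdef, Multiset.card_bind]
      rfl
    rw [h1, Finset.sum_congr rfl (fun e _ => show
        Multiset.card (if e ∈ E' then redChainM e else plainChainM e) =
          (n + 1) + (if e ∈ E' then 1 else 0) from by
      by_cases hr : e ∈ E'
      · rw [if_pos hr, if_pos hr, card_redChainM]
      · rw [if_neg hr, if_neg hr, card_plainChainM hn])]
    rw [Finset.sum_add_distrib, Finset.sum_const, hFcard, ← Finset.sum_filter,
      Finset.filter_mem_eq_inter, ← Finset.card_eq_sum_ones, hinter, smul_eq_mul]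
  have hAmem : ∀ v ∈ A, v ∈ votes18 E E' k := by
    intro v hv
    rw [hAdef] at hv
    obtain ⟨e, heF, hv⟩ := Multiset.mem_bind.mp hv
    rw [Finset.mem_val] at heF
    refine (mem_votes18 hn).mpr (Or.inr (Or.inl ⟨e, hFE heF, ?_⟩))
    by_cases hr : e ∈ E'
    · rw [if_pos hr] at hv ⊢
      exact mem_redChainM_sub hv
    · rw [if_neg hr] at hv ⊢
      exact mem_plainChainM_sub hv
  have hAscore : ∀ c, flScore18 A c =
      ∑ e ∈ F, ((if bC e.2 = c then (1:ℤ) else 0) - (if aC e.1 = c then 1 else 0)) := by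
    intro c
    rw [hAdef, flScore18_eq, Multiset.map_bind, Multiset.sum_bind]
    rw [show (Multiset.map (fun e => (Multiset.map (fun v => wt v c)
        (if e ∈ E' then redChainM e else plainChainM e)).sum) F.val).sum =
      ∑ e ∈ F, flScore18 (if e ∈ E' then redChainM e else plainChainM e) c from by
        rw [Finset.sum_congr rfl (fun e _ => (flScore18_eq _ c))]; rfl]
    refine Finset.sum_congr rfl (fun e _ => ?_)
    by_cases hr : e ∈ E'
    · rw [if_pos hr, flScore18_redChainM]
    · rw [if_neg hr, flScore18_plainChainM hn]
  have hfib1 : ∀ g : Fin n → ℤ, (∑ e ∈ F, g e.1) = ∑ i : Fin n, g i := by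
    intro g
    rw [← Finset.sum_fiberwise F (fun e => e.1) (fun e => g e.1)]
    refine Finset.sum_congr rfl (fun i _ => ?_)
    rw [Finset.sum_congr rfl (fun e he => show g e.1 = g i from by
      rw [(Finset.mem_filter.mp he).2])]
    rw [Finset.sum_const, hrow i, one_smul]
  have hfib2 : ∀ g : Fin n → ℤ, (∑ e ∈ F, g e.2) = ∑ j : Fin n, g j := by
    intro g
    rw [← Finset.sum_fiberwise F (fun e => e.2) (fun e => g e.2)]
    refine Finset.sum_congr rfl (fun j _ => ?_)
    rw [Finset.sum_congr rfl (fun e he => show g e.2 = g j from by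
      rw [(Finset.mem_filter.mp he).2])]
    rw [Finset.sum_const, hcol j, one_smul]
  have hzero : ∀ c, flScore18 (votesBase E E' + A) c = 0 := by
    intro c
    rw [flScore18_add, hAscore, flScore18_votesBase hn]
    rw [Finset.sum_sub_distrib, Finset.sum_sub_distrib,
      hfib1 (fun i => if aC i = c then (1:ℤ) else 0),
      hfib2 (fun j => if bC j = c then (1:ℤ) else 0)]
    ring
  refine ⟨Multiset.replicate (n * (n + 1) + k) (rC n, rhatC n), ?_, ?_, A, ?_, hAmem, ?_⟩
  · rw [votes18_eq]
    exact Multiset.le_add_left _ _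
  · rw [Multiset.card_replicate]
  · rw [hAcard, Multiset.card_replicate]
  · intro c
    rw [sub_replicate, hzero, hzero]

end Stmt18



/-- In the first-last conformant bribery construction (add
candidates `r`, `r̂` and `n(n+1)+k` voters `r > ⋯ > r̂` to the manipulation
construction, bribe limit `n(n+1)+k`): `p` can be made a first-last winner by
a conformant bribery of at most `n(n+1)+k` voters iff the graph has a perfect
matching with exactly `k` red edges; moreover, any successful conformant
bribery must change exactly the `n(n+1)+k` added `r`-voters. -/
theorem stmt_18 (n k : ℕ) (hn : 0 < n) (hk : k ≤ n + 1)
    (E E' : Finset (Fin n × Fin n)) (hE' : E' ⊆ E) :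
    ((∃ R ≤ votes18 E E' k, Multiset.card R ≤ n * (n + 1) + k ∧
        ∃ A : Multiset (Vote18 n), Multiset.card A = Multiset.card R ∧
          (∀ v ∈ A, v ∈ votes18 E E' k) ∧
          ∀ c : Cand18 n,
            flScore18 (votes18 E E' k - R + A) c ≤
              flScore18 (votes18 E E' k - R + A) (pC n))
      ↔ (∃ F ⊆ E,
          (∀ i : Fin n, (F.filter (fun e => e.1 = i)).card = 1) ∧
          (∀ j : Fin n, (F.filter (fun e => e.2 = j)).card = 1) ∧
          (F ∩ E').card = k))
    ∧ (∀ R ≤ votes18 E E' k, Multiset.card R ≤ n * (n + 1) + k →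
        ∀ A : Multiset (Vote18 n), Multiset.card A = Multiset.card R →
          (∀ v ∈ A, v ∈ votes18 E E' k) →
          (∀ c : Cand18 n,
            flScore18 (votes18 E E' k - R + A) c ≤
              flScore18 (votes18 E E' k - R + A) (pC n)) →
          R = Multiset.replicate (n * (n + 1) + k) (rC n, rhatC n)) := by
  constructor
  · constructor
    · rintro ⟨R, hR, hcard, A, hAc, hA, hw⟩
      obtain ⟨hRrep, hArr, hAcard⟩ := Stmt18.r_analysis hn hR hcard hAc hA hw
      rw [hRrep, Stmt18.sub_replicate] at hw
      have hmem : ∀ v ∈ Stmt18.votesBase E E' + A, v ∈ votes18 E E' k := by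
        intro v hv
        rcases Multiset.mem_add.mp hv with h | h
        · rw [Stmt18.votes18_eq]
          exact Multiset.mem_add.mpr (Or.inl h)
        · exact hA v h
      have hz := Stmt18.scores_zero hn hmem hw
      exact Stmt18.forward_main hn hk hE' hA hAcard hz hArr
    · rintro ⟨F, hFE, hrow, hcol, hinter⟩
      exact Stmt18.backward_main hn hk hE' hFE hrow hcol hinter
  · intro R hR hcard A hAc hA hw
    exact (Stmt18.r_analysis hn hR hcard hAc hA hw).1
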